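/- Let p ≥ 1 be an integer and α ≠ 0 a real number. Suppose x₀ : ℝ → ℝ is continuous with inf_{t∈ℝ} |x₀(t) − α| bounded so that |x₀(t)| ≥ δ > 0 for all t and sup_t |x₀(t)| ≤ M. Define P(ξ,t) = (2p+1)∫₀¹ (x₀(t)+sξ)^{2p} ds and Q(ξ) = (2p+1)∫₀¹ (α+sξ)^{2p} ds, and R(ξ,t) = P(ξ,t)/Q(ξ). Then there exist positive constants R₁ and R₂ such that R₁ < R(ξ,t) < R₂ for all ξ ∈ ℝ and t ∈ ℝ. -/

import Mathlib

lemma mnn {x y : ℝ} (hx : x ≤ 0) (hy : y ≤ 0) : 0 ≤ x*y := by nlinarith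

lemma pow_even_le (p : ℕ) {a b : ℝ} (h : |a| ≤ |b|) : a^(2*p) ≤ b^(2*p) := by
  rw [pow_mul, pow_mul]
  apply pow_le_pow_left₀ (sq_nonneg a)
  rw [← sq_abs a, ← sq_abs b]
  exact pow_le_pow_left₀ (abs_nonneg a) h 2

lemma pow_even_nonneg (p : ℕ) (a : ℝ) : 0 ≤ a^(2*p) := by
  rw [pow_mul]; positivity

lemma pow_even_abs (p : ℕ) (a : ℝ) : |a|^(2*p) = a^(2*p) := by
  rw [pow_mul, pow_mul, sq_abs]

lemma sign_lemma (p : ℕ) (a b : ℝ) : 0 ≤ (a + b) * (b^(2*p) - a^(2*p)) * (b - a) := by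
  rcases le_total 0 (a + b) with hab | hab <;> rcases le_total a b with hba | hba
  · have hb : 0 ≤ b := by linarith
    have h1 : |a| ≤ |b| := by rw [abs_of_nonneg hb, abs_le]; constructor <;> linarith
    have h2 := pow_even_le p h1
    exact mul_nonneg (mul_nonneg hab (by linarith)) (by linarith)
  · have ha : 0 ≤ a := by linarith
    have h1 : |b| ≤ |a| := by rw [abs_of_nonneg ha, abs_le]; constructor <;> linarith
    have h2 := pow_even_le p h1
    exact mnn (mul_nonpos_iff.mpr (Or.inl ⟨hab, by linarith⟩)) (by linarith)
  · have ha : a ≤ 0 := by linarith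
    have h1 : |b| ≤ |a| := by rw [abs_of_nonpos ha, abs_le]; constructor <;> linarith
    have h2 := pow_even_le p h1
    exact mul_nonneg (mnn (by linarith) (by linarith)) (by linarith)
  · have hb : b ≤ 0 := by linarith
    have h1 : |a| ≤ |b| := by rw [abs_of_nonpos hb, abs_le]; constructor <;> linarith
    have h2 := pow_even_le p h1
    exact mnn (mul_nonpos_iff.mpr (Or.inr ⟨hab, by linarith⟩)) (by linarith)

lemma hsum0 (p : ℕ) (b : ℝ) : ∑ i ∈ Finset.range (2*p+1), b^i * b^(2*p - i)
      = (2*p+1 : ℝ) * b^(2*p) := by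
  have h : ∀ i ∈ Finset.range (2*p+1), b^i * b^(2*p-i) = b^(2*p) := by
    intro i hi
    rw [← pow_add, Nat.add_sub_cancel' (Nat.lt_succ_iff.mp (Finset.mem_range.mp hi))]
  rw [Finset.sum_congr rfl h, Finset.sum_const, Finset.card_range]
  push_cast [nsmul_eq_mul]; ring

lemma key_int (p : ℕ) (a ξ : ℝ) :
    (2*p+1 : ℝ) * ∫ s in (0:ℝ)..1, (a + s*ξ)^(2*p)
      = ∑ i ∈ Finset.range (2*p+1), (a+ξ)^i * a^(2*p - i) := by
  rcases eq_or_ne ξ 0 with h | h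
  · subst h
    simp only [mul_zero, add_zero]
    rw [hsum0, intervalIntegral.integral_const]
    simp
  · have h1 : ∀ s : ℝ, (a + s*ξ)^(2*p) = (fun u : ℝ => u^(2*p)) (ξ * s + a) := by
      intro s; simp [mul_comm, add_comm]
    simp_rw [h1]
    rw [intervalIntegral.integral_comp_mul_add (fun u : ℝ => u^(2*p)) h a]
    rw [integral_pow]
    have key := geom_sum₂_mul (R := ℝ) (a+ξ) a (2*p+1)
    have h2 : ∀ i, 2*p+1-1-i = 2*p - i := by intro i; omega
    simp_rw [h2] at key
    have h3 : (a + ξ) - a = ξ := by ring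
    rw [h3] at key
    have h4 : ξ * 1 + a = a + ξ := by ring
    have h5 : ξ * 0 + a = a := by ring
    rw [h4, h5, ← key, smul_eq_mul]
    have hne : ((2*p:ℕ) + 1 : ℝ) ≠ 0 := by positivity
    push_cast
    field_simp

lemma S_lower (p : ℕ) (a b : ℝ) :
    (a^(2*p) + b^(2*p))/2 ≤ ∑ i ∈ Finset.range (2*p+1), b^i * a^(2*p - i) := by
  rcases eq_or_ne b a with rfl | hne
  · rw [hsum0]
    have := pow_even_nonneg p b
    nlinarith [Nat.cast_nonneg (α := ℝ) p]
  · set S := ∑ i ∈ Finset.range (2*p+1), b^i * a^(2*p - i) with hS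
    have key := geom_sum₂_mul (R := ℝ) b a (2*p+1)
    have h2 : ∀ i, 2*p+1-1-i = 2*p - i := by intro i; omega
    simp_rw [h2] at key
    have h1 : (2*S - (a^(2*p) + b^(2*p))) * (b-a)^2
        = (a+b) * (b^(2*p) - a^(2*p)) * (b-a) := by
      linear_combination (2*(b-a)) * key
    have h3 := sign_lemma p a b
    have h4 : (0:ℝ) < (b-a)^2 := by have := sub_ne_zero.mpr hne; positivity
    nlinarith [h1, h3, h4]

lemma S_upper (p : ℕ) (a b : ℝ) :
    ∑ i ∈ Finset.range (2*p+1), b^i * a^(2*p - i)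
      ≤ (2*p+1 : ℝ) * (a^(2*p) + b^(2*p)) := by
  have hterm : ∀ i ∈ Finset.range (2*p+1), b^i * a^(2*p - i) ≤ a^(2*p) + b^(2*p) := by
    intro i hi
    have hi' : i ≤ 2*p := Nat.lt_succ_iff.mp (Finset.mem_range.mp hi)
    have habs : b^i * a^(2*p-i) ≤ |b|^i * |a|^(2*p-i) := by
      calc b^i * a^(2*p-i) ≤ |b^i * a^(2*p-i)| := le_abs_self _
        _ = |b|^i * |a|^(2*p-i) := by rw [abs_mul, abs_pow, abs_pow]
    rcases le_total |a| |b| with h | h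
    · have : |b|^i * |a|^(2*p-i) ≤ |b|^i * |b|^(2*p-i) :=
        mul_le_mul_of_nonneg_left (pow_le_pow_left₀ (abs_nonneg a) h _) (by positivity)
      have heq : |b|^i * |b|^(2*p-i) = b^(2*p) := by
        rw [← pow_add, Nat.add_sub_cancel' hi', pow_even_abs]
      nlinarith [pow_even_nonneg p a]
    · have : |b|^i * |a|^(2*p-i) ≤ |a|^i * |a|^(2*p-i) :=
        mul_le_mul_of_nonneg_right (pow_le_pow_left₀ (abs_nonneg b) h _) (by positivity)
      have heq : |a|^i * |a|^(2*p-i) = a^(2*p) := by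
        rw [← pow_add, Nat.add_sub_cancel' hi', pow_even_abs]
      nlinarith [pow_even_nonneg p b]
  calc ∑ i ∈ Finset.range (2*p+1), b^i * a^(2*p - i)
      ≤ ∑ _i ∈ Finset.range (2*p+1), (a^(2*p) + b^(2*p)) := Finset.sum_le_sum hterm
    _ = (2*p+1 : ℝ) * (a^(2*p) + b^(2*p)) := by
        rw [Finset.sum_const, Finset.card_range]; push_cast [nsmul_eq_mul]; ring

lemma cross (p : ℕ) (u v K : ℝ) (hK : 0 ≤ K) (h : |u| ≤ |v| + K) :
    u^(2*p) ≤ 2^(2*p) * (v^(2*p) + K^(2*p)) := by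
  have h1 : u^(2*p) ≤ (|v| + K)^(2*p) := by
    rw [← pow_even_abs p u]
    exact pow_le_pow_left₀ (abs_nonneg u) h _
  have h2 : (|v| + K)^(2*p) ≤ (2 * max |v| K)^(2*p) := by
    apply pow_le_pow_left₀ (by positivity)
    have := le_max_left |v| K
    have := le_max_right |v| K
    linarith
  have h3 : (2 * max |v| K)^(2*p) = 2^(2*p) * (max |v| K)^(2*p) := mul_pow 2 _ _
  have h4 : (max |v| K)^(2*p) ≤ v^(2*p) + K^(2*p) := by
    rcases le_total |v| K with hvk | hvk
    · rw [max_eq_right hvk]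
      nlinarith [pow_even_nonneg p v]
    · rw [max_eq_left hvk, pow_even_abs]
      nlinarith [pow_even_nonneg p K]
  nlinarith [pow_even_nonneg p (max |v| K), pow_pos (show (0:ℝ) < 2 by norm_num) (2*p)]

set_option maxHeartbeats 1000000 in
theorem stmt_3 (p : ℕ) (hp : 1 ≤ p) (α : ℝ) (hα : α ≠ 0)
    (x₀ : ℝ → ℝ) (hcont : Continuous x₀)
    (δ : ℝ) (hδ : 0 < δ) (hlow : ∀ t, δ ≤ |x₀ t|)
    (M : ℝ) (hup : ∀ t, |x₀ t| ≤ M) :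
    ∃ R₁ R₂ : ℝ, 0 < R₁ ∧ 0 < R₂ ∧ ∀ ξ t : ℝ,
      R₁ < ((2 * p + 1 : ℝ) * ∫ s in (0:ℝ)..1, (x₀ t + s * ξ) ^ (2 * p)) /
            ((2 * p + 1 : ℝ) * ∫ s in (0:ℝ)..1, (α + s * ξ) ^ (2 * p)) ∧
      ((2 * p + 1 : ℝ) * ∫ s in (0:ℝ)..1, (x₀ t + s * ξ) ^ (2 * p)) /
            ((2 * p + 1 : ℝ) * ∫ s in (0:ℝ)..1, (α + s * ξ) ^ (2 * p)) < R₂ := by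
  have hM : 0 < M := lt_of_lt_of_le hδ (le_trans (hlow 0) (hup 0))
  set K : ℝ := M + |α| with hKdef
  have hKpos : 0 < K := by have := abs_nonneg α; positivity
  have hα2p : 0 < α^(2*p) := by
    rw [← pow_even_abs p α]; exact pow_pos (abs_pos.mpr hα) _
  have hδ2p : 0 < δ^(2*p) := pow_pos hδ _
  have h2pow : (0:ℝ) < 2^(2*p) := by positivity
  have hnp : (0:ℝ) < 2*p+1 := by positivity
  have hA'pos : 0 < (2*p+1 : ℝ) * (α^(2*p) + 2^(2*p)*K^(2*p)) := by
    have := pow_pos hKpos (2*p); positivity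
  have hApos : 0 < (2*p+1 : ℝ) * (M^(2*p) + 2^(2*p)*K^(2*p)) := by
    have := pow_pos hKpos (2*p); have := pow_pos hM (2*p); positivity
  set A' : ℝ := (2*p+1 : ℝ) * (α^(2*p) + 2^(2*p)*K^(2*p)) with hA'
  set B' : ℝ := (2*p+1 : ℝ) * 2^(2*p) with hB'
  have hB'pos : 0 < B' := by rw [hB']; positivity
  set c : ℝ := min (δ^(2*p)/(2*A')) (1/(2*B')) with hc
  have hcpos : 0 < c := lt_min (by positivity) (by positivity)
  set A : ℝ := (2*p+1 : ℝ) * (M^(2*p) + 2^(2*p)*K^(2*p)) with hA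
  set D : ℝ := max (A/α^(2*p)) B' with hD
  have hDpos : 0 < D := lt_of_lt_of_le hB'pos (le_max_right _ _)
  refine ⟨c/2, 2*D+1, by positivity, by positivity, fun ξ t => ?_⟩
  set x : ℝ := x₀ t with hxdef
  have hx : δ ≤ |x| := hlow t
  have hxM : |x| ≤ M := hup t
  rw [key_int p x ξ, key_int p α ξ]
  set P : ℝ := ∑ i ∈ Finset.range (2*p+1), (x+ξ)^i * x^(2*p - i) with hP
  set Q : ℝ := ∑ i ∈ Finset.range (2*p+1), (α+ξ)^i * α^(2*p - i) with hQ
  have hPl := S_lower p x (x+ξ)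
  have hPu := S_upper p x (x+ξ)
  have hQl := S_lower p α (α+ξ)
  have hQu := S_upper p α (α+ξ)
  rw [← hP] at hPl hPu
  rw [← hQ] at hQl hQu
  clear_value K A' B' c A D P Q x
  have hu : 0 ≤ (α+ξ)^(2*p) := pow_even_nonneg p _
  have hv : 0 ≤ (x+ξ)^(2*p) := pow_even_nonneg p _
  have hQpos : 0 < Q := by linarith
  have htri1 : |α + ξ| ≤ |x + ξ| + K := by
    have h0 : α + ξ = (x + ξ) + (α - x) := by ring
    have h1 : |α - x| ≤ |α| + |x| := abs_sub α x
    calc |α + ξ| = |(x + ξ) + (α - x)| := by rw [← h0]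
      _ ≤ |x + ξ| + |α - x| := abs_add_le _ _
      _ ≤ |x + ξ| + K := by rw [hKdef]; linarith
  have htri2 : |x + ξ| ≤ |α + ξ| + K := by
    have h0 : x + ξ = (α + ξ) + (x - α) := by ring
    have h1 : |x - α| ≤ |x| + |α| := abs_sub x α
    calc |x + ξ| = |(α + ξ) + (x - α)| := by rw [← h0]
      _ ≤ |α + ξ| + |x - α| := abs_add_le _ _
      _ ≤ |α + ξ| + K := by rw [hKdef]; linarith
  have hcross1 : (α+ξ)^(2*p) ≤ 2^(2*p) * ((x+ξ)^(2*p) + K^(2*p)) :=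
    cross p _ _ K hKpos.le htri1
  have hcross2 : (x+ξ)^(2*p) ≤ 2^(2*p) * ((α+ξ)^(2*p) + K^(2*p)) :=
    cross p _ _ K hKpos.le htri2
  have hxδ : δ^(2*p) ≤ x^(2*p) := pow_even_le p (by rw [abs_of_pos hδ]; exact hx)
  have hxMp : x^(2*p) ≤ M^(2*p) := pow_even_le p (by rw [abs_of_pos hM]; exact hxM)
  have hQle : Q ≤ A' + B' * (x+ξ)^(2*p) := by
    have step : (2*p+1:ℝ) * (α+ξ)^(2*p) ≤ (2*p+1:ℝ) * (2^(2*p) * ((x+ξ)^(2*p) + K^(2*p))) :=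
      mul_le_mul_of_nonneg_left hcross1 hnp.le
    have e1 : A' + B' * (x+ξ)^(2*p)
        = (2*p+1:ℝ) * α^(2*p) + (2*p+1:ℝ) * (2^(2*p) * ((x+ξ)^(2*p) + K^(2*p))) := by
      rw [hA', hB']; ring
    have e2 : (2*p+1:ℝ) * (α^(2*p) + (α+ξ)^(2*p))
        = (2*p+1:ℝ) * α^(2*p) + (2*p+1:ℝ) * (α+ξ)^(2*p) := by ring
    rw [e2] at hQu
    linarith
  have hPle : P ≤ A + B' * (α+ξ)^(2*p) := by
    have step : (2*p+1:ℝ) * (x+ξ)^(2*p) ≤ (2*p+1:ℝ) * (2^(2*p) * ((α+ξ)^(2*p) + K^(2*p))) :=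
      mul_le_mul_of_nonneg_left hcross2 hnp.le
    have step2 : (2*p+1:ℝ) * x^(2*p) ≤ (2*p+1:ℝ) * M^(2*p) :=
      mul_le_mul_of_nonneg_left hxMp hnp.le
    have e1 : A + B' * (α+ξ)^(2*p)
        = (2*p+1:ℝ) * M^(2*p) + (2*p+1:ℝ) * (2^(2*p) * ((α+ξ)^(2*p) + K^(2*p))) := by
      rw [hA, hB']; ring
    have e2 : (2*p+1:ℝ) * (x^(2*p) + (x+ξ)^(2*p))
        = (2*p+1:ℝ) * x^(2*p) + (2*p+1:ℝ) * (x+ξ)^(2*p) := by ring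
    rw [e2] at hPu
    linarith
  have hADle : A ≤ D * α^(2*p) := by
    have h1 : A/α^(2*p) ≤ D := by rw [hD]; exact le_max_left _ _
    have := mul_le_mul_of_nonneg_right h1 hα2p.le
    rwa [div_mul_cancel₀ _ (ne_of_gt hα2p)] at this
  have hcA : c * A' ≤ δ^(2*p)/2 := by
    have h1 : c ≤ δ^(2*p)/(2*A') := by rw [hc]; exact min_le_left _ _
    have h2 := mul_le_mul_of_nonneg_right h1 hA'pos.le
    have e : δ^(2*p)/(2*A') * A' = δ^(2*p)/2 := by
      field_simp
    linarith
  have hcB : c * B' ≤ 1/2 := by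
    have h1 : c ≤ 1/(2*B') := by rw [hc]; exact min_le_right _ _
    have h2 := mul_le_mul_of_nonneg_right h1 hB'pos.le
    have e : 1/(2*B') * B' = 1/2 := by
      field_simp
    linarith
  constructor
  · -- lower bound
    have hPge : (δ^(2*p) + (x+ξ)^(2*p))/2 ≤ P := by linarith
    have hfinal : c * Q ≤ P := by
      have h1 : c * Q ≤ c * (A' + B' * (x+ξ)^(2*p)) :=
        mul_le_mul_of_nonneg_left hQle hcpos.le
      have h2 : c * (A' + B' * (x+ξ)^(2*p)) = c * A' + (c * B') * (x+ξ)^(2*p) := by ring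
      have h3 : (c * B') * (x+ξ)^(2*p) ≤ (1/2) * (x+ξ)^(2*p) :=
        mul_le_mul_of_nonneg_right hcB hv
      linarith [h1, h2, h3, hcA, hPge]
    have h4 : c ≤ P / Q := (le_div_iff₀ hQpos).mpr hfinal
    linarith
  · -- upper bound
    have hBD : B' * (α+ξ)^(2*p) ≤ D * (α+ξ)^(2*p) :=
      mul_le_mul_of_nonneg_right (by rw [hD]; exact le_max_right _ _ : B' ≤ D) hu
    have hQge : α^(2*p) + (α+ξ)^(2*p) ≤ 2 * Q := by linarith
    have hfinal : P ≤ (2*D) * Q := by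
      have h1 : P ≤ D * α^(2*p) + D * (α+ξ)^(2*p) := by linarith
      have h2 : D * (α^(2*p) + (α+ξ)^(2*p)) ≤ D * (2*Q) :=
        mul_le_mul_of_nonneg_left hQge hDpos.le
      have e3 : D * (α^(2*p) + (α+ξ)^(2*p)) = D * α^(2*p) + D * (α+ξ)^(2*p) := by ring
      have e4 : D * (2*Q) = (2*D) * Q := by ring
      linarith [h1, h2, e3, e4]
    have h4 : P / Q ≤ 2*D := (div_le_iff₀ hQpos).mpr hfinal
    linarith
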